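/- FX inverse-direction hybrid identity (core of Lemma 11 of the paper): Fix y_{j+1} ∈ V with y_{j+1} ∉ {y₁, …, y_j} and s ∈ V with s ∉ {y₁ ⊕ k₂, …, y_j ⊕ k₂}. Let E' be the permutation of V determined by E'⁻¹ = E⁻¹ ∘ swap(y_{j+1} ⊕ k₂, s) (equivalently E' = E ∘ swap(E⁻¹(y_{j+1} ⊕ k₂), E⁻¹(s))), and define E'^{T_r} by the same recursion with E replaced by E'. Set x_{j+1} = (E^{T_j})⁻¹(s) ⊕ k₁ and E^{T_{j+1}} = swap(E^{T_j}(x_{j+1} ⊕ k₁), y_{j+1} ⊕ k₂) ∘ E^{T_j}. Then E'^{T_j} = E^{T_{j+1}} as permutations of V. -/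

import Mathlib

/-- The reprogrammed permutations `E^{T_i}` of the FX hybrid argument:
`E^{T_0} = E` and `E^{T_i} = swap(E^{T_{i-1}}(x_i ⊕ k₁), y_i ⊕ k₂) ∘ E^{T_{i-1}}`. -/
def fxReprog {V : Type*} [DecidableEq V] [Add V]
    (E : Equiv.Perm V) (k₁ k₂ : V) (x y : ℕ → V) : ℕ → Equiv.Perm V
  | 0 => E
  | i + 1 =>
      Equiv.swap (fxReprog E k₁ k₂ x y i (x (i + 1) + k₁)) (y (i + 1) + k₂) *
        fxReprog E k₁ k₂ x y i

lemma char_two_add_add {n : ℕ} (a b : Fin n → ZMod 2) : a + b + b = a := by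
  funext i
  simp only [Pi.add_apply]
  rw [add_assoc, CharTwo.add_self_eq_zero, add_zero]

/-- FX inverse-direction hybrid identity (core of Lemma 11): for a fresh inverse
query `y_{j+1}` and resampling point `s ∉ {y₁ ⊕ k₂, …, y_j ⊕ k₂}`, let `E'` be the
permutation with `E'⁻¹ = E⁻¹ ∘ swap(y_{j+1} ⊕ k₂, s)`, set
`x_{j+1} = (E^{T_j})⁻¹(s) ⊕ k₁` and
`E^{T_{j+1}} = swap(E^{T_j}(x_{j+1} ⊕ k₁), y_{j+1} ⊕ k₂) ∘ E^{T_j}`.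
Then `E'^{T_j} = E^{T_{j+1}}` as permutations. -/
theorem fx_inverse_hybrid_identity {n j : ℕ} (hn : 1 ≤ n)
    (E : Equiv.Perm (Fin n → ZMod 2)) (k₁ k₂ : Fin n → ZMod 2)
    (x y : ℕ → Fin n → ZMod 2) (s : Fin n → ZMod 2)
    (hyj : ∀ i, 1 ≤ i → i ≤ j → y (j + 1) ≠ y i)
    (hs : ∀ i, 1 ≤ i → i ≤ j → s ≠ y i + k₂)
    (E' : Equiv.Perm (Fin n → ZMod 2))
    (hE' : E'⁻¹ = E⁻¹ * Equiv.swap (y (j + 1) + k₂) s)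
    (xj1 : Fin n → ZMod 2)
    (hxj1 : xj1 = (fxReprog E k₁ k₂ x y j)⁻¹ s + k₁) :
    fxReprog E' k₁ k₂ x y j =
      Equiv.swap (fxReprog E k₁ k₂ x y j (xj1 + k₁)) (y (j + 1) + k₂) *
        fxReprog E k₁ k₂ x y j := by
  set σ : Equiv.Perm (Fin n → ZMod 2) := Equiv.swap (y (j + 1) + k₂) s with hσdef
  have hσ : E' = σ * E := by
    have h := congrArg Inv.inv hE'
    rwa [inv_inv, mul_inv_rev, inv_inv, Equiv.swap_inv] at h
  have hσinv : σ⁻¹ = σ := Equiv.swap_inv _ _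
  have hσσ : σ * σ = 1 := Equiv.swap_mul_self _ _
  have main : ∀ r, r ≤ j → fxReprog E' k₁ k₂ x y r = σ * fxReprog E k₁ k₂ x y r := by
    intro r
    induction r with
    | zero => intro _; simpa [fxReprog] using hσ
    | succ r ih =>
      intro hr
      have ihr := ih (Nat.le_of_succ_le hr)
      have hfix : σ (y (r + 1) + k₂) = y (r + 1) + k₂ := by
        apply Equiv.swap_apply_of_ne_of_ne
        · intro h
          exact hyj (r + 1) (by omega) (by omega) (add_right_cancel h).symm
        · intro h
          exact hs (r + 1) (by omega) (by omega) h.symm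
      show Equiv.swap (fxReprog E' k₁ k₂ x y r (x (r + 1) + k₁)) (y (r + 1) + k₂) *
          fxReprog E' k₁ k₂ x y r =
        σ * (Equiv.swap (fxReprog E k₁ k₂ x y r (x (r + 1) + k₁)) (y (r + 1) + k₂) *
          fxReprog E k₁ k₂ x y r)
      rw [ihr]
      simp only [Equiv.Perm.mul_apply]
      set u := fxReprog E k₁ k₂ x y r (x (r + 1) + k₁)
      have hswap : Equiv.swap (σ u) (y (r + 1) + k₂)
          = σ * Equiv.swap u (y (r + 1) + k₂) * σ⁻¹ := by
        rw [← Equiv.swap_apply_apply, hfix]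
      rw [hswap, hσinv]
      calc σ * Equiv.swap u (y (r + 1) + k₂) * σ * (σ * fxReprog E k₁ k₂ x y r)
          = σ * Equiv.swap u (y (r + 1) + k₂) * (σ * σ) * fxReprog E k₁ k₂ x y r := by
            simp [mul_assoc]
        _ = σ * (Equiv.swap u (y (r + 1) + k₂) * fxReprog E k₁ k₂ x y r) := by
            rw [hσσ, mul_one, mul_assoc]
  have hx : xj1 + k₁ = (fxReprog E k₁ k₂ x y j)⁻¹ s := by
    rw [hxj1, char_two_add_add]
  have happ : fxReprog E k₁ k₂ x y j (xj1 + k₁) = s := by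
    rw [hx]; exact Equiv.apply_symm_apply _ _
  rw [main j le_rfl, happ, Equiv.swap_comm]
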